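/- Let a and b be orientation-preserving self-homeomorphisms of the circle S¹ = ℝ/ℤ such that each c ∈ {a, b, a⁻¹, b⁻¹} has exactly one attracting fixed point in S¹. Suppose for each such c there is a connected closed subset P(c) ⊆ S¹ containing the attracting fixed point of c, such that the four sets P(a), P(b), P(a⁻¹), P(b⁻¹) are pairwise disjoint, and for each such c we have c(S¹ \ P(c⁻¹)) ⊆ P(c) and the restriction of c to S¹ \ P(c⁻¹) is contracting. Then every non-trivial element of the subgroup ⟨a, b⟩ has exactly one attracting fixed point in S¹. -/

import Mathlib

noncomputable section

/-- The circle `S¹ = ℝ/ℤ`, with its arclength (quotient) metric. -/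
abbrev Circle1 := AddCircle (1 : ℝ)

/-- The group of self-homeomorphisms of a space, with `(f * g) x = f (g x)`. -/
instance {X : Type*} [TopologicalSpace X] : Group (X ≃ₜ X) where
  mul f g := g.trans f
  one := Homeomorph.refl _
  inv := Homeomorph.symm
  mul_assoc _ _ _ := Homeomorph.ext fun _ => rfl
  one_mul _ := Homeomorph.ext fun _ => rfl
  mul_one _ := Homeomorph.ext fun _ => rfl
  inv_mul_cancel f := Homeomorph.ext f.symm_apply_apply

/-- `x` is an attracting fixed point of `f`: it is fixed, and there is an open
neighborhood `U` of `x` such that the iterates of every point of `U` converge to `x`. -/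
def IsAttractingFixedPt {X : Type*} [TopologicalSpace X] (f : X → X) (x : X) : Prop :=
  f x = x ∧ ∃ U : Set X, IsOpen U ∧ x ∈ U ∧
    ∀ y ∈ U, Filter.Tendsto (fun k => f^[k] y) Filter.atTop (nhds x)

/-- `f` is contracting on the set `S`: it strictly decreases distances between
distinct points of `S`. -/
def ContractingOn {X : Type*} [MetricSpace X] (f : X → X) (S : Set X) : Prop :=
  ∀ x ∈ S, ∀ y ∈ S, x ≠ y → dist (f x) (f y) < dist x y

/-- A self-homeomorphism of `ℝ/ℤ` is orientation-preserving if it lifts to a strictly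
increasing homeomorphism of `ℝ`. -/
def OrientationPreserving (f : Circle1 ≃ₜ Circle1) : Prop :=
  ∃ F : ℝ ≃ₜ ℝ, StrictMono F ∧ ∀ t : ℝ, f ((t : ℝ) : Circle1) = ((F t : ℝ) : Circle1)

/-- The hypotheses of the contracting Ping-Pong Lemma for orientation-preserving
self-homeomorphisms `a, b` of `S¹` with ping-pong sets `Pa, Pb, Pa', Pb'` (for
`a`, `b`, `a⁻¹`, `b⁻¹` respectively). -/
structure ContractingPingPong (a b : Circle1 ≃ₜ Circle1)
    (Pa Pb Pa' Pb' : Set Circle1) : Prop where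
  orient_a : OrientationPreserving a
  orient_b : OrientationPreserving b
  unique_attract_a : ∃! x, IsAttractingFixedPt (⇑a) x
  unique_attract_b : ∃! x, IsAttractingFixedPt (⇑b) x
  unique_attract_a' : ∃! x, IsAttractingFixedPt (⇑a⁻¹) x
  unique_attract_b' : ∃! x, IsAttractingFixedPt (⇑b⁻¹) x
  closed_a : IsClosed Pa
  closed_b : IsClosed Pb
  closed_a' : IsClosed Pa'
  closed_b' : IsClosed Pb'
  connected_a : IsConnected Pa
  connected_b : IsConnected Pb
  connected_a' : IsConnected Pa'
  connected_b' : IsConnected Pb'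
  attract_mem_a : ∀ x, IsAttractingFixedPt (⇑a) x → x ∈ Pa
  attract_mem_b : ∀ x, IsAttractingFixedPt (⇑b) x → x ∈ Pb
  attract_mem_a' : ∀ x, IsAttractingFixedPt (⇑a⁻¹) x → x ∈ Pa'
  attract_mem_b' : ∀ x, IsAttractingFixedPt (⇑b⁻¹) x → x ∈ Pb'
  disj_ab : Disjoint Pa Pb
  disj_aa' : Disjoint Pa Pa'
  disj_ab' : Disjoint Pa Pb'
  disj_ba' : Disjoint Pb Pa'
  disj_bb' : Disjoint Pb Pb'
  disj_a'b' : Disjoint Pa' Pb'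
  maps_a : ⇑a '' Pa'ᶜ ⊆ Pa
  maps_b : ⇑b '' Pb'ᶜ ⊆ Pb
  maps_a' : ⇑a⁻¹ '' Paᶜ ⊆ Pa'
  maps_b' : ⇑b⁻¹ '' Pbᶜ ⊆ Pb'
  contracting_a : ContractingOn (⇑a) Pa'ᶜ
  contracting_b : ContractingOn (⇑b) Pb'ᶜ
  contracting_a' : ContractingOn (⇑a⁻¹) Paᶜ
  contracting_b' : ContractingOn (⇑b⁻¹) Pbᶜ

namespace PingPongAux

open Filter Topology

set_option maxHeartbeats 1000000

local instance : Fact ((0 : ℝ) < 1) := ⟨one_pos⟩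

@[simp] lemma homeo_mul_apply (f g : Circle1 ≃ₜ Circle1) (x : Circle1) :
    (f * g) x = f (g x) := rfl

@[simp] lemma homeo_one_apply (x : Circle1) : (1 : Circle1 ≃ₜ Circle1) x = x := rfl

lemma homeo_inv_apply_apply (f : Circle1 ≃ₜ Circle1) (x : Circle1) :
    f⁻¹ (f x) = x := f.symm_apply_apply x

/-- Circle has no isolated points. -/
lemma nhdsNE_neBot (y : Circle1) : (𝓝[≠] y).NeBot := by
  by_contra h
  rw [Filter.not_neBot, ← isOpen_singleton_iff_punctured_nhds] at h
  have hnt : ((1/2 : ℝ) : Circle1) ≠ 0 := by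
    intro hc
    rw [AddCircle.coe_eq_zero_iff] at hc
    obtain ⟨n, hn⟩ := hc
    have hn' : ((2:ℝ)⁻¹) = (n : ℝ) := by simpa using hn.symm
    rcases le_or_gt n 0 with h0 | h0
    · have : (n : ℝ) ≤ 0 := by exact_mod_cast h0
      norm_num at hn'
      linarith
    · have : (1 : ℝ) ≤ (n : ℝ) := by exact_mod_cast h0
      norm_num at hn'
      linarith
  have hclopen : IsClopen ({y} : Set Circle1) := ⟨isClosed_singleton, h⟩
  rcases isClopen_iff.mp hclopen with h1 | h1
  · exact (Set.singleton_ne_empty y) h1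
  · have h2 : ((1/2 : ℝ) : Circle1) ∈ ({y} : Set Circle1) := h1 ▸ Set.mem_univ _
    have h3 : (0 : Circle1) ∈ ({y} : Set Circle1) := h1 ▸ Set.mem_univ _
    exact hnt (h2.trans h3.symm)

/-- Edelstein fixed point theorem on a compact subset of the circle. -/
lemma edelstein (K : Set Circle1) (hcl : IsClosed K) (hKne : K.Nonempty)
    (f : Circle1 → Circle1) (hf : Continuous f) (hmap : ∀ x ∈ K, f x ∈ K)
    (hcon : ContractingOn f K) :
    ∃ x ∈ K, f x = x ∧ ∀ y ∈ K, Tendsto (fun k => f^[k] y) atTop (𝓝 x) := by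
  have hK : IsCompact K := hcl.isCompact
  obtain ⟨x₀, hx₀, hmin⟩ := hK.exists_isMinOn hKne
    ((continuous_id.dist hf).continuousOn)
  have hfix : f x₀ = x₀ := by
    by_contra hne
    have h1 := hcon x₀ hx₀ (f x₀) (hmap _ hx₀) (fun hc => hne hc.symm)
    have h2 : dist x₀ (f x₀) ≤ dist (f x₀) (f (f x₀)) := hmin (hmap _ hx₀)
    linarith
  refine ⟨x₀, hx₀, hfix, ?_⟩
  intro y hy
  have hiter : ∀ k, f^[k] y ∈ K := by
    intro k
    exact Set.MapsTo.iterate (fun x hx => hmap x hx) k hy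
  set d : ℕ → ℝ := fun k => dist (f^[k] y) x₀ with hd
  have hanti : Antitone d := by
    apply antitone_nat_of_succ_le
    intro k
    by_cases hk : f^[k] y = x₀
    · have : f^[k+1] y = x₀ := by
        rw [Function.iterate_succ_apply', hk, hfix]
      simp [hd, this, hk]
    · have := hcon _ (hiter k) x₀ hx₀ hk
      rw [hfix] at this
      have h2 : d (k+1) = dist (f (f^[k] y)) x₀ := by
        simp [hd, Function.iterate_succ_apply']
      rw [h2]
      exact le_of_lt this
  have hbdd : BddBelow (Set.range d) := ⟨0, by rintro _ ⟨k, rfl⟩; exact dist_nonneg⟩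
  set L := ⨅ k, d k with hL
  have hdL : Tendsto d atTop (𝓝 L) := tendsto_atTop_ciInf hanti hbdd
  have hL0 : L = 0 := by
    obtain ⟨z, hzK, φ, hφ, hφconv⟩ := hK.tendsto_subseq hiter
    have hzd : dist z x₀ = L := by
      have h1 : Tendsto (fun n => d (φ n)) atTop (𝓝 L) :=
        hdL.comp hφ.tendsto_atTop
      have h2 : Tendsto (fun n => dist (f^[φ n] y) x₀) atTop (𝓝 (dist z x₀)) :=
        (Continuous.dist continuous_id continuous_const).continuousAt.tendsto.comp hφconv
      exact tendsto_nhds_unique h2 h1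
    have hfzd : dist (f z) x₀ = L := by
      have h1 : Tendsto (fun n => d (φ n + 1)) atTop (𝓝 L) :=
        hdL.comp (tendsto_atTop_mono (fun n => Nat.le_succ (φ n)) hφ.tendsto_atTop)
      have h2 : Tendsto (fun n => dist (f^[φ n + 1] y) x₀) atTop (𝓝 (dist (f z) x₀)) := by
        have h3 : Tendsto (fun n => f (f^[φ n] y)) atTop (𝓝 (f z)) :=
          (hf.continuousAt.tendsto).comp hφconv
        simp only [Function.iterate_succ_apply']
        exact ((Continuous.dist continuous_id continuous_const).continuousAt.tendsto).comp h3
      exact tendsto_nhds_unique h2 h1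
    by_contra hLne
    have hzx : z ≠ x₀ := by
      intro hc; rw [hc] at hzd; simp at hzd; exact hLne hzd.symm
    have := hcon z hzK x₀ hx₀ hzx
    rw [hfix, hfzd, hzd] at this
    exact lt_irrefl L this
  rw [tendsto_iff_dist_tendsto_zero]
  rw [hL0] at hdL
  exact hdL

/-- The four letters of our ping-pong alphabet. -/
inductive L : Type
  | A | B | A' | B'
  deriving DecidableEq

open L

/-- Formal inverse of a letter. -/
def inv : L → L
  | A => A' | B => B' | A' => A | B' => B

@[simp] lemma inv_inv (e : L) : inv (inv e) = e := by cases e <;> rfl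

lemma inv_ne (e : L) : inv e ≠ e := by cases e <;> simp [inv]

section Words

variable (t : L → Circle1 ≃ₜ Circle1) (P : L → Set Circle1)

/-- The homeomorphism represented by a word. -/
def W (w : List L) : Circle1 ≃ₜ Circle1 := (w.map t).prod

@[simp] lemma W_nil : W t [] = 1 := rfl

lemma W_cons (e : L) (w : List L) : W t (e :: w) = t e * W t w := by
  simp [W]

lemma W_append (u v : List L) : W t (u ++ v) = W t u * W t v := by
  simp [W]

/-- The letter at the end of the nonempty word `e :: w`. -/
def last1 : L → List L → L
  | e, [] => e
  | _, f :: w => last1 f w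

@[simp] lemma last1_nil (e : L) : last1 e [] = e := rfl

@[simp] lemma last1_cons (e f : L) (w : List L) : last1 e (f :: w) = last1 f w := rfl

lemma last1_concat (e x : L) : ∀ (w : List L), last1 e (w ++ [x]) = x := by
  intro w
  induction w generalizing e with
  | nil => rfl
  | cons f u ih => simpa using ih f

/-- A word is reduced if no two adjacent letters are formal inverses. -/
def Red (w : List L) : Prop := w.Chain' (fun x y => y ≠ inv x)

/-- All the ping-pong hypotheses, in letter-indexed form. -/
structure Hyp : Prop where
  dis : ∀ e f, e ≠ f → Disjoint (P e) (P f)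
  maps : ∀ e x, x ∉ P (inv e) → t e x ∈ P e
  con : ∀ e, ContractingOn (⇑(t e)) (P (inv e))ᶜ
  cl : ∀ e, IsClosed (P e)
  nem : ∀ e, (P e).Nonempty
  tinv : ∀ e, t (inv e) = (t e)⁻¹

variable {t P}

lemma Hyp.sub_compl (h : Hyp t P) {e f : L} (hef : e ≠ f) : P e ⊆ (P f)ᶜ :=
  (h.dis e f hef).subset_compl_right

/-- Ping-pong: a reduced word maps the complement of the inverse-of-last-letter set
into the first-letter set, contracting distances. -/
lemma key (h : Hyp t P) : ∀ (w : List L) (e : L), Red (e :: w) →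
    (∀ x, x ∉ P (inv (last1 e w)) → W t (e :: w) x ∈ P e) ∧
      ContractingOn (⇑(W t (e :: w))) (P (inv (last1 e w)))ᶜ := by
  intro w
  induction w with
  | nil =>
    intro e _
    constructor
    · intro x hx
      have := h.maps e x hx
      simpa [W_cons] using this
    · intro x hx y hy hxy
      have := h.con e x hx y hy hxy
      simpa [W_cons] using this
  | cons f w ih =>
    intro e hr
    have hr' : Red (f :: w) := hr.tail
    have hef : f ≠ inv e := (List.isChain_cons_cons.mp hr).1
    obtain ⟨hm, hc⟩ := ih f hr'
    have hPf : P f ⊆ (P (inv e))ᶜ := h.sub_compl hef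
    constructor
    · intro x hx
      have h1 : W t (f :: w) x ∈ P f := hm x hx
      have h2 := h.maps e _ (hPf h1)
      simpa [W_cons] using h2
    · intro x hx y hy hxy
      have h1 : W t (f :: w) x ≠ W t (f :: w) y :=
        fun hh => hxy ((W t (f :: w)).injective hh)
      have d1 := hc x hx y hy hxy
      have d2 := h.con e _ (hPf (hm x hx)) _ (hPf (hm y hy)) h1
      have hrw : ∀ z, W t (e :: f :: w) z = t e (W t (f :: w) z) := by
        intro z; simp [W_cons]
      rw [hrw, hrw]
      exact lt_trans d2 d1

/-- The inverse of a word's homeomorphism is the homeomorphism of the reversed,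
letterwise-inverted word. -/
lemma W_invword (h : Hyp t P) : ∀ w : List L, W t (w.reverse.map inv) = (W t w)⁻¹ := by
  intro w
  induction w with
  | nil => simp
  | cons e w ih =>
    have : (e :: w).reverse.map inv = w.reverse.map inv ++ [inv e] := by
      simp
    rw [this, W_append, ih, W_cons t e w, W_cons t (inv e) [], W_nil, mul_one,
      h.tinv e, mul_inv_rev]

lemma Red_invword {w : List L} (hw : Red w) : Red (w.reverse.map inv) := by
  rw [Red, List.Chain', List.isChain_map, List.isChain_reverse]
  refine List.IsChain.imp ?_ hw
  intro x y hxy hc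
  rw [inv_inv] at hc
  exact hxy hc.symm

end Words

end PingPongAux
namespace PingPongAux

open Filter Topology L

section Main

variable {t : L → Circle1 ≃ₜ Circle1} {P : L → Set Circle1}

lemma last1_eq_of_concat : ∀ (u : List L) (x f : L) (v : List L),
    f :: v = u ++ [x] → last1 f v = x := by
  intro u x f v huv
  cases u with
  | nil =>
    simp only [List.nil_append, List.cons.injEq] at huv
    rw [huv.2, huv.1]
    rfl
  | cons g u' =>
    simp only [List.cons_append, List.cons.injEq] at huv
    rw [huv.2, last1_concat]

/-- Main dynamics for a cyclically reduced word: unique attracting fixed point. -/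
theorem unique_cyc (h : Hyp t P) (e : L) (w : List L) (hred : Red (e :: w))
    (hcyc : e ≠ inv (last1 e w)) :
    ∃! x : Circle1, IsAttractingFixedPt (⇑(W t (e :: w))) x := by
  set g := W t (e :: w) with hg
  set n := last1 e w with hn
  obtain ⟨hm, hc⟩ := key h w e hred
  have hsub : P e ⊆ (P (inv n))ᶜ := h.sub_compl hcyc
  have hmapped : ∀ x ∈ P e, g x ∈ P e := fun x hx => hm x (hsub hx)
  obtain ⟨x₀, hx₀, hfix, hconv⟩ := edelstein (P e) (h.cl e) (h.nem e) (⇑g)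
    g.continuous hmapped (fun x hx y hy => hc x (hsub hx) y (hsub hy))
  refine ⟨x₀, ⟨hfix, (P (inv n))ᶜ, (h.cl (inv n)).isOpen_compl, hsub hx₀, ?_⟩, ?_⟩
  · intro y hy
    have h1 : g y ∈ P e := hm y hy
    have h2 := hconv _ h1
    have h3 : (fun k => g^[k] (g y)) = fun k => g^[k + 1] y := by
      funext k; rw [Function.iterate_succ_apply]
    rw [h3] at h2
    exact (Filter.tendsto_add_atTop_iff_nat 1).mp h2
  · rintro y ⟨hyfix, U, hU, hyU, hyconv⟩
    by_cases hyP : y ∈ P (inv n)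
    · exfalso
      have hinvred : Red ((e :: w).reverse.map inv) := Red_invword hred
      obtain ⟨f₀, v₀, hv₀⟩ : ∃ f₀ v₀, (e :: w).reverse.map inv = f₀ :: v₀ := by
        cases hrev : (e :: w).reverse.map inv with
        | nil =>
          exfalso
          have := congrArg List.length hrev
          simp at this
        | cons f v => exact ⟨f, v, rfl⟩
      have hlast : last1 f₀ v₀ = inv e :=
        last1_eq_of_concat (w.reverse.map inv) (inv e) f₀ v₀ (by rw [← hv₀]; simp)
      have hkey' := key h v₀ f₀ (hv₀ ▸ hinvred)
      rw [hlast, inv_inv] at hkey'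
      obtain ⟨_, hc'⟩ := hkey'
      have hWinv : W t (f₀ :: v₀) = g⁻¹ := by rw [← hv₀, W_invword h]
      rw [hWinv] at hc'
      have hyPe : y ∈ (P e)ᶜ := h.sub_compl (Ne.symm hcyc) hyP
      haveI := nhdsNE_neBot y
      have hUPe : U ∩ (P e)ᶜ ∈ 𝓝[≠] y :=
        mem_nhdsWithin_of_mem_nhds
          (Filter.inter_mem (hU.mem_nhds hyU) ((h.cl e).isOpen_compl.mem_nhds hyPe))
      obtain ⟨z, ⟨hzU, hzPe⟩, hzy⟩ :=
        Filter.nonempty_of_mem (Filter.inter_mem hUPe self_mem_nhdsWithin)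
      have hzy' : z ≠ y := hzy
      have hconvz := hyconv z hzU
      have hfixiter : ∀ k, g^[k] y = y := fun k => Function.iterate_fixed hyfix k
      have hnek : ∀ k, g^[k] z ≠ y := by
        intro k hk
        exact hzy' (g.injective.iterate k (by rw [hk, hfixiter k]))
      have hev : ∀ᶠ k in atTop, g^[k] z ∈ (P e)ᶜ :=
        hconvz ((h.cl e).isOpen_compl.mem_nhds hyPe)
      obtain ⟨N, hN⟩ := Filter.eventually_atTop.mp hev
      have hstep : ∀ k, k ≥ N → dist (g^[k] z) y < dist (g^[k + 1] z) y := by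
        intro k hk
        have h1 : g^[k + 1] z ∈ (P e)ᶜ := hN (k + 1) (le_trans hk (Nat.le_succ k))
        have h2 := hc' (g^[k + 1] z) h1 y hyPe (hnek (k + 1))
        have h3 : g⁻¹ (g^[k + 1] z) = g^[k] z := by
          rw [Function.iterate_succ_apply']; exact g.symm_apply_apply _
        have h4 : g⁻¹ y = y := by
          nth_rewrite 1 [← hyfix]
          exact g.symm_apply_apply y
        rw [h3, h4] at h2
        exact h2
      have hmono : ∀ k, N ≤ k → dist (g^[N] z) y ≤ dist (g^[k] z) y := by
        intro k hk
        induction k, hk using Nat.le_induction with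
        | base => exact le_rfl
        | succ m hm ih => exact ih.trans (hstep m hm).le
      have hd0 : Tendsto (fun k => dist (g^[k] z) y) atTop (𝓝 0) := by
        simpa using hconvz.dist (tendsto_const_nhds (x := y))
      have hle : dist (g^[N] z) y ≤ 0 := by
        apply ge_of_tendsto hd0
        filter_upwards [Filter.eventually_ge_atTop N] with k hk
        exact hmono k hk
      have hpos : (0 : ℝ) < dist (g^[N] z) y := dist_pos.mpr (hnek N)
      linarith
    · by_contra hne
      have := hc y hyP x₀ (hsub hx₀) hne
      rw [hyfix, hfix] at this
      exact lt_irrefl _ this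

lemma conj_iterate (c g : Circle1 ≃ₜ Circle1) (k : ℕ) (x : Circle1) :
    (⇑(c * g * c⁻¹))^[k] (c x) = c (g^[k] x) := by
  induction k with
  | zero => simp
  | succ m ih =>
    rw [Function.iterate_succ_apply', ih, Function.iterate_succ_apply']
    show c (g (c⁻¹ (c (g^[m] x)))) = c (g (g^[m] x))
    rw [homeo_inv_apply_apply]

lemma attract_conj (c g : Circle1 ≃ₜ Circle1) (x : Circle1)
    (hx : IsAttractingFixedPt (⇑g) x) : IsAttractingFixedPt (⇑(c * g * c⁻¹)) (c x) := by
  obtain ⟨hfix, U, hU, hxU, hconv⟩ := hx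
  refine ⟨?_, ⇑c '' U, c.isOpen_image.mpr hU, ⟨x, hxU, rfl⟩, ?_⟩
  · show c (g (c⁻¹ (c x))) = c x
    rw [homeo_inv_apply_apply, hfix]
  · rintro y ⟨u, huU, rfl⟩
    have h1 := hconv u huU
    have h2 : Tendsto (fun k => c (g^[k] u)) atTop (𝓝 (c x)) :=
      (c.continuous.continuousAt.tendsto).comp h1
    have h3 : (fun k => (⇑(c * g * c⁻¹))^[k] (c u)) = fun k => c (g^[k] u) := by
      funext k; exact conj_iterate c g k u
    rw [h3]
    exact h2

lemma unique_conj {g : Circle1 ≃ₜ Circle1} (c : Circle1 ≃ₜ Circle1)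
    (hg : ∃! x : Circle1, IsAttractingFixedPt (⇑g) x) :
    ∃! x : Circle1, IsAttractingFixedPt (⇑(c * g * c⁻¹)) x := by
  obtain ⟨x₀, hx₀, huniq⟩ := hg
  refine ⟨c x₀, attract_conj c g x₀ hx₀, ?_⟩
  intro y hy
  have h1 : (c⁻¹ * (c * g * c⁻¹) * c⁻¹⁻¹ : Circle1 ≃ₜ Circle1) = g := by group
  have h2 := attract_conj c⁻¹ (c * g * c⁻¹) y hy
  rw [h1] at h2
  have h3 := huniq _ h2
  rw [← h3]
  exact (c.apply_symm_apply y).symm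

/-- Cyclic reduction: every reduced word is conjugate to a cyclically reduced word. -/
lemma cyc_red (h : Hyp t P) : ∀ (N : ℕ) (e : L) (w : List L), w.length ≤ N → Red (e :: w) →
    ∃ (c : Circle1 ≃ₜ Circle1) (f : L) (v : List L), Red (f :: v) ∧ f ≠ inv (last1 f v) ∧
      W t (e :: w) = c * W t (f :: v) * c⁻¹ := by
  intro N
  induction N with
  | zero =>
    intro e w hw _hred
    have hwnil : w = [] := List.length_eq_zero_iff.mp (Nat.le_zero.mp hw)
    subst hwnil
    exact ⟨1, e, [], List.isChain_singleton e, Ne.symm (inv_ne e), by group⟩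
  | succ N ih =>
    intro e w hw hred
    by_cases hcyc : e ≠ inv (last1 e w)
    · exact ⟨1, e, w, hred, hcyc, by group⟩
    · push_neg at hcyc
      have hwne : w ≠ [] := by
        rintro rfl
        exact inv_ne e (by simpa using hcyc.symm)
      rcases w.eq_nil_or_concat with rfl | ⟨u, x, hux⟩
      · exact absurd rfl hwne
      rw [List.concat_eq_append] at hux
      subst hux
      have hx : x = inv e := by rw [last1_concat] at hcyc; rw [hcyc, inv_inv]
      subst hx
      cases u with
      | nil =>
        exfalso
        have := (List.isChain_cons_cons.mp hred).1
        exact this rfl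
      | cons f u' =>
        have hred' : Red (f :: u') := by
          have hinf : (f :: u') <:+: (e :: (f :: u' ++ [inv e])) :=
            ⟨[e], [inv e], by simp⟩
          exact List.IsChain.infix hred hinf
        have hlen : u'.length ≤ N := by
          simp only [List.length_append, List.length_cons, List.length_singleton] at hw
          omega
        obtain ⟨c, f', v, hv1, hv2, hv3⟩ := ih f u' hlen hred'
        refine ⟨t e * c, f', v, hv1, hv2, ?_⟩
        have hWe : W t (e :: (f :: u' ++ [inv e])) = t e * (W t (f :: u') * (t e)⁻¹) := by
          rw [W_cons t e, W_append t (f :: u') [inv e], W_cons t (inv e) [], W_nil,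
            mul_one, h.tinv e]
        rw [hWe, hv3]
        group

/-- Every word is equivalent to a reduced word. -/
lemma exists_red (h : Hyp t P) : ∀ w : List L, ∃ v : List L, Red v ∧ W t v = W t w := by
  intro w
  induction w with
  | nil => exact ⟨[], List.isChain_nil, rfl⟩
  | cons e w ih =>
    obtain ⟨v, hv1, hv2⟩ := ih
    cases v with
    | nil =>
      refine ⟨[e], List.isChain_singleton e, ?_⟩
      rw [W_cons t e w, ← hv2, W_nil, W_cons t e [], W_nil]
    | cons f v' =>
      by_cases hef : f = inv e
      · refine ⟨v', hv1.tail, ?_⟩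
        subst hef
        rw [W_cons t e w, ← hv2, W_cons t (inv e) v', h.tinv e, ← mul_assoc,
          mul_inv_cancel, one_mul]
      · refine ⟨e :: f :: v', List.isChain_cons_cons.mpr ⟨hef, hv1⟩, ?_⟩
        rw [W_cons t e (f :: v'), W_cons t e w, hv2]

end Main

/-- The concrete letter-to-homeomorphism assignment. -/
def tmap (a b : Circle1 ≃ₜ Circle1) : L → Circle1 ≃ₜ Circle1
  | A => a | B => b | A' => a⁻¹ | B' => b⁻¹

/-- The concrete letter-to-set assignment. -/
def Pmap (Pa Pb Pa' Pb' : Set Circle1) : L → Set Circle1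
  | A => Pa | B => Pb | A' => Pa' | B' => Pb'

lemma hyp_of_pingpong {a b : Circle1 ≃ₜ Circle1} {Pa Pb Pa' Pb' : Set Circle1}
    (hpp : ContractingPingPong a b Pa Pb Pa' Pb') :
    Hyp (tmap a b) (Pmap Pa Pb Pa' Pb') := by
  constructor
  · intro e f hef
    cases e <;> cases f <;>
      first
        | exact absurd rfl hef
        | exact hpp.disj_ab | exact hpp.disj_ab.symm
        | exact hpp.disj_aa' | exact hpp.disj_aa'.symm
        | exact hpp.disj_ab' | exact hpp.disj_ab'.symm
        | exact hpp.disj_ba' | exact hpp.disj_ba'.symm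
        | exact hpp.disj_bb' | exact hpp.disj_bb'.symm
        | exact hpp.disj_a'b' | exact hpp.disj_a'b'.symm
  · intro e x hx
    cases e
    · exact hpp.maps_a ⟨x, hx, rfl⟩
    · exact hpp.maps_b ⟨x, hx, rfl⟩
    · exact hpp.maps_a' ⟨x, hx, rfl⟩
    · exact hpp.maps_b' ⟨x, hx, rfl⟩
  · intro e
    cases e
    · exact hpp.contracting_a
    · exact hpp.contracting_b
    · exact hpp.contracting_a'
    · exact hpp.contracting_b'
  · intro e
    cases e
    · exact hpp.closed_a
    · exact hpp.closed_b
    · exact hpp.closed_a'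
    · exact hpp.closed_b'
  · intro e
    cases e
    · exact hpp.connected_a.nonempty
    · exact hpp.connected_b.nonempty
    · exact hpp.connected_a'.nonempty
    · exact hpp.connected_b'.nonempty
  · intro e
    cases e
    · rfl
    · rfl
    · show a = (a⁻¹)⁻¹; rw [_root_.inv_inv]
    · show b = (b⁻¹)⁻¹; rw [_root_.inv_inv]

end PingPongAux
/-- **Contracting Ping-Pong, dynamics**: under the contracting ping-pong hypotheses, every
non-trivial element of the subgroup `⟨a, b⟩` has exactly one attracting fixed point. -/
theorem pingpong_unique_attracting (a b : Circle1 ≃ₜ Circle1) (Pa Pb Pa' Pb' : Set Circle1)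
    (hpp : ContractingPingPong a b Pa Pb Pa' Pb') :
    ∀ g ∈ Subgroup.closure ({a, b} : Set (Circle1 ≃ₜ Circle1)), g ≠ 1 →
      ∃! x : Circle1, IsAttractingFixedPt (⇑g) x := by
  intro g hg hg1
  classical
  set t := PingPongAux.tmap a b with ht
  have h : PingPongAux.Hyp t (PingPongAux.Pmap Pa Pb Pa' Pb') := PingPongAux.hyp_of_pingpong hpp
  have hword : ∃ w : List PingPongAux.L, PingPongAux.W t w = g := by
    have hg' : g ∈ Submonoid.closure (({a, b} : Set (Circle1 ≃ₜ Circle1)) ∪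
        ({a, b} : Set (Circle1 ≃ₜ Circle1))⁻¹) := by
      rw [← Subgroup.closure_toSubmonoid]
      exact hg
    obtain ⟨l, hl, hprod⟩ := Submonoid.exists_list_of_mem_closure hg'
    suffices hsuf : ∀ l' : List (Circle1 ≃ₜ Circle1),
        (∀ y ∈ l', y ∈ ({a, b} : Set (Circle1 ≃ₜ Circle1)) ∪
          ({a, b} : Set (Circle1 ≃ₜ Circle1))⁻¹) →
        ∃ w : List PingPongAux.L, PingPongAux.W t w = l'.prod by
      obtain ⟨w, hw⟩ := hsuf l hl
      exact ⟨w, hw.trans hprod⟩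
    intro l'
    induction l' with
    | nil => exact fun _ => ⟨[], rfl⟩
    | cons y l'' ihl =>
      intro hyl
      obtain ⟨w, hw⟩ := ihl fun z hz => hyl z (List.mem_cons_of_mem y hz)
      have hy := hyl y (List.mem_cons_self)
      rw [List.prod_cons]
      rcases hy with hy | hy
      · rcases Set.mem_insert_iff.mp hy with rfl | hy2
        · exact ⟨.A :: w, by rw [PingPongAux.W_cons, hw]; rfl⟩
        · rw [Set.mem_singleton_iff] at hy2
          subst hy2
          exact ⟨.B :: w, by rw [PingPongAux.W_cons, hw]; rfl⟩
      · rw [Set.mem_inv] at hy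
        rcases Set.mem_insert_iff.mp hy with hy2 | hy2
        · have : y = a⁻¹ := inv_eq_iff_eq_inv.mp hy2
          subst this
          exact ⟨.A' :: w, by rw [PingPongAux.W_cons, hw]; rfl⟩
        · rw [Set.mem_singleton_iff] at hy2
          have : y = b⁻¹ := inv_eq_iff_eq_inv.mp hy2
          subst this
          exact ⟨.B' :: w, by rw [PingPongAux.W_cons, hw]; rfl⟩
  obtain ⟨w, hw⟩ := hword
  obtain ⟨v, hv1, hv2⟩ := PingPongAux.exists_red h w
  cases v with
  | nil =>
    exfalso
    apply hg1
    rw [← hw, ← hv2]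
    rfl
  | cons e v' =>
    obtain ⟨c, f, v'', h1, h2, h3⟩ := PingPongAux.cyc_red h v'.length e v' le_rfl hv1
    have huc := PingPongAux.unique_cyc h f v'' h1 h2
    have hfin := PingPongAux.unique_conj c huc
    rw [← h3, hv2, hw] at hfin
    exact hfin
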